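/- arXiv:1308.2720 — 2 statements merged into one kernel-verified Lean document; each statement's English description precedes it below -/
import Mathlib

section
/- For every positive integer r, ∫₀¹∫₀¹ xʳyʳ/(1-xy) dx dy = ζ(2) - ∑_{m=1}^{r} 1/m². -/
open MeasureTheory

lemma beukers_integral_pow_Ioo (k : ℕ) :
    ∫ x in Set.Ioo (0:ℝ) 1, x ^ k = 1 / ((k : ℝ) + 1) := by
  rw [← integral_Ioc_eq_integral_Ioo, ← intervalIntegral.integral_of_le zero_le_one,
    integral_pow]
  simp

lemma beukers_integrable (k : ℕ) (c : ℝ) :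
    Integrable (fun x : ℝ => c * x ^ k) (volume.restrict (Set.Ioo 0 1)) := by
  have : IntegrableOn (fun x : ℝ => c * x ^ k) (Set.Icc 0 1) volume :=
    (Continuous.integrableOn_Icc (by continuity))
  exact this.mono_set Set.Ioo_subset_Icc_self

lemma beukers_key (a : ℕ → ℝ) (ha : ∀ n, 0 ≤ a n) (k : ℕ → ℕ)
    (hsum : Summable fun n => a n / ((k n : ℝ) + 1)) :
    ∫ x in Set.Ioo (0:ℝ) 1, ∑' n, a n * x ^ (k n) = ∑' n, a n / ((k n : ℝ) + 1) := by
  have hval : ∀ n, ∫ x in Set.Ioo (0:ℝ) 1, a n * x ^ (k n) = a n / ((k n : ℝ) + 1) := by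
    intro n
    rw [integral_const_mul, beukers_integral_pow_Ioo]
    ring
  have hnorm : ∀ n, (∫ x in Set.Ioo (0:ℝ) 1, ‖a n * x ^ (k n)‖) = a n / ((k n : ℝ) + 1) := by
    intro n
    rw [setIntegral_congr_fun measurableSet_Ioo
      (g := fun x : ℝ => a n * x ^ (k n)) ?_, hval]
    intro x hx
    exact abs_of_nonneg (mul_nonneg (ha n) (pow_nonneg hx.1.le _))
  rw [← MeasureTheory.integral_tsum_of_summable_integral_norm
      (fun n => beukers_integrable (k n) (a n)) (by simpa only [hnorm] using hsum)]
  exact tsum_congr hval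

lemma beukers_inner (r : ℕ) (x : ℝ) (hx : x ∈ Set.Ioo (0:ℝ) 1) :
    ∫ y in (0:ℝ)..1, x ^ r * y ^ r / (1 - x * y)
      = ∑' n : ℕ, x ^ (n + r) / ((n + r : ℕ) + 1 : ℝ) := by
  rw [intervalIntegral.integral_of_le zero_le_one, integral_Ioc_eq_integral_Ioo]
  have hcongr : ∀ y ∈ Set.Ioo (0:ℝ) 1,
      x ^ r * y ^ r / (1 - x * y) = ∑' n : ℕ, x ^ (n + r) * y ^ (n + r) := by
    intro y hy
    have hxy0 : 0 ≤ x * y := mul_nonneg hx.1.le hy.1.le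
    have hxy1 : x * y < 1 := by nlinarith [hx.1, hx.2, hy.1, hy.2]
    have h1 : ∀ n : ℕ, x ^ (n + r) * y ^ (n + r) = (x * y) ^ r * (x * y) ^ n := by
      intro n; rw [← mul_pow, pow_add]; ring
    rw [tsum_congr h1, tsum_mul_left, tsum_geometric_of_lt_one hxy0 hxy1,
      mul_pow]
    field_simp
  rw [setIntegral_congr_fun measurableSet_Ioo hcongr]
  exact beukers_key (fun n => x ^ (n + r)) (fun n => pow_nonneg hx.1.le _)
    (fun n => n + r) (by
      apply Summable.of_nonneg_of_le
        (fun n => div_nonneg (pow_nonneg hx.1.le _) (by positivity))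
        (fun n => ?_)
        (((summable_geometric_of_lt_one hx.1.le hx.2).mul_left (x ^ r)))
      calc x ^ (n + r) / ((n + r : ℕ) + 1 : ℝ) ≤ x ^ (n + r) / 1 :=
            div_le_div_of_nonneg_left (pow_nonneg hx.1.le _) one_pos
              (le_add_of_nonneg_left (Nat.cast_nonneg _))
          _ = x ^ r * x ^ n := by rw [div_one, pow_add]; ring)

theorem beukers_Irr (r : ℕ) (hr : 0 < r) :
    (∫ x in (0:ℝ)..1, ∫ y in (0:ℝ)..1, x ^ r * y ^ r / (1 - x * y)) =
      (∑' n : ℕ, 1 / ((n : ℝ) + 1) ^ 2) - ∑ m ∈ Finset.Icc 1 r, 1 / (m : ℝ) ^ 2 := by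
  have hf : Summable (fun n : ℕ => 1 / ((n : ℝ) + 1) ^ 2) := by
    have h : Summable (fun n : ℕ => 1 / (n : ℝ) ^ 2) :=
      Real.summable_one_div_nat_pow.mpr (by norm_num)
    have h2 := (summable_nat_add_iff 1).mpr h
    apply h2.congr
    intro n
    push_cast
    ring
  have hcongr : Set.EqOn (fun x : ℝ => ∫ y in (0:ℝ)..1, x ^ r * y ^ r / (1 - x * y))
      (fun x : ℝ => ∑' n : ℕ, (1 / ((n + r : ℕ) + 1 : ℝ)) * x ^ (n + r)) (Set.Ioo 0 1) :=
    fun x hx => (beukers_inner r x hx).trans (tsum_congr fun n => by ring)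
  rw [intervalIntegral.integral_of_le zero_le_one, integral_Ioc_eq_integral_Ioo,
    setIntegral_congr_fun measurableSet_Ioo hcongr]
  have hsum2 : Summable (fun n : ℕ => (1 / (((n + r : ℕ) : ℝ) + 1)) / (((n + r : ℕ) : ℝ) + 1)) := by
    apply ((summable_nat_add_iff r).mpr hf).congr
    intro n
    rw [div_div, ← sq]
  rw [beukers_key (fun n => 1 / (((n + r : ℕ) : ℝ) + 1)) (fun n => by positivity)
    (fun n => n + r) hsum2]
  have h3 := Summable.sum_add_tsum_nat_add (f := fun n : ℕ => 1 / ((n : ℝ) + 1) ^ 2) r hf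
  have h4 : ∑' n : ℕ, (1 / (((n + r : ℕ) : ℝ) + 1)) / (((n + r : ℕ) : ℝ) + 1)
      = ∑' n : ℕ, 1 / (((n + r : ℕ) : ℝ) + 1) ^ 2 := tsum_congr fun n => by rw [div_div, ← sq]
  have h5 : ∀ s : ℕ, ∑ m ∈ Finset.Icc 1 s, 1 / (m : ℝ) ^ 2
      = ∑ i ∈ Finset.range s, 1 / ((i : ℝ) + 1) ^ 2 := by
    intro s
    induction s with
    | zero => simp
    | succ k ih =>
      rw [Finset.sum_Icc_succ_top (by omega), ih, Finset.sum_range_succ]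
      push_cast
      ring
  rw [h4, h5, ← h3]
  push_cast
  ring
end

section
/- For nonnegative integers r ≠ s, -∫₀¹∫₀¹ xʳyˢ ln(xy)/(1-xy) dx dy = (H_r⁽²⁾ - H_s⁽²⁾)/(r - s), where H_n⁽²⁾ = ∑_{k=1}^{n} 1/k² (with H_0⁽²⁾ = 0). -/
open MeasureTheory Real intervalIntegral Set

lemma hasDeriv_G (m : ℕ) {x : ℝ} (hx : 0 < x) :
    HasDerivAt (fun y : ℝ => y ^ (m+1) / ((m:ℝ)+1)^2 - y ^ (m+1) * Real.log y / ((m:ℝ)+1))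
      (x ^ m * (-Real.log x)) x := by
  have h1 : HasDerivAt (fun y : ℝ => y ^ (m+1)) (((m:ℝ)+1) * x ^ m) x := by
    simpa using (hasDerivAt_pow (m+1) x)
  have h2 : HasDerivAt Real.log x⁻¹ x := Real.hasDerivAt_log hx.ne'
  have h3 : HasDerivAt (fun y : ℝ => y ^ (m+1) * Real.log y)
      (((m:ℝ)+1) * x ^ m * Real.log x + x ^ (m+1) * x⁻¹) x := h1.mul h2
  have := (h1.div_const (((m:ℝ)+1)^2)).sub (h3.div_const ((m:ℝ)+1))
  refine this.congr_deriv ?_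
  have hm : ((m:ℝ)+1) ≠ 0 := by positivity
  field_simp
  rw [pow_succ]
  ring

lemma contG (m : ℕ) : ContinuousOn
    (fun y : ℝ => y ^ (m+1) / ((m:ℝ)+1)^2 - y ^ (m+1) * Real.log y / ((m:ℝ)+1)) (Icc 0 1) := by
  apply ContinuousOn.sub
  · exact (continuous_pow _).continuousOn.div_const _
  · apply ContinuousOn.div_const
    have : Continuous fun y : ℝ => y ^ m * (y * Real.log y) :=
      (continuous_pow m).mul Real.continuous_mul_log
    have heq : (fun y : ℝ => y ^ (m+1) * Real.log y) = fun y => y ^ m * (y * Real.log y) := by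
      funext y; rw [pow_succ]; ring
    rw [heq]; exact this.continuousOn

lemma intble_negLog (m : ℕ) : IntervalIntegrable (fun y : ℝ => y ^ m * (-Real.log y)) volume 0 1 := by
  apply intervalIntegrable_deriv_of_nonneg (g := fun y : ℝ =>
      y ^ (m+1) / ((m:ℝ)+1)^2 - y ^ (m+1) * Real.log y / ((m:ℝ)+1))
  · simpa [uIcc_of_le (zero_le_one' ℝ)] using contG m
  · intro x hx
    simp only [min_self, zero_le_one, min_eq_left, max_eq_right] at hx
    exact hasDeriv_G m hx.1
  · intro x hx
    simp only [zero_le_one, min_eq_left, max_eq_right] at hx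
    have h1 : Real.log x ≤ 0 := Real.log_nonpos hx.1.le hx.2.le
    exact mul_nonneg (pow_nonneg hx.1.le m) (neg_nonneg.2 h1)

lemma integral_negLog (m : ℕ) :
    ∫ y in (0:ℝ)..1, y ^ m * (-Real.log y) = 1 / ((m:ℝ)+1)^2 := by
  rw [integral_eq_sub_of_hasDeriv_right (f := fun y : ℝ =>
      y ^ (m+1) / ((m:ℝ)+1)^2 - y ^ (m+1) * Real.log y / ((m:ℝ)+1))]
  · norm_num
  · simpa [uIcc_of_le (zero_le_one' ℝ)] using contG m
  · intro x hx
    simp only [zero_le_one, min_eq_left, max_eq_right] at hx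
    exact (hasDeriv_G m hx.1).hasDerivWithinAt
  · exact intble_negLog m


noncomputable def vf (r s k : ℕ) (x : ℝ) : ℝ :=
  x ^ (r+k) * ((-Real.log x) / ((s:ℝ)+k+1) + 1 / ((s:ℝ)+k+1)^2)

lemma uk_integrable (r s k : ℕ) (x : ℝ) :
    IntervalIntegrable (fun y : ℝ => x ^ (r+k) *
      (y ^ (s+k) * (-Real.log x) + y ^ (s+k) * (-Real.log y))) volume 0 1 := by
  apply IntervalIntegrable.const_mul
  exact (((continuous_pow (s+k)).intervalIntegrable 0 1).mul_const _).add (intble_negLog (s+k))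

lemma uk_integral (r s k : ℕ) (x : ℝ) :
    ∫ y in (0:ℝ)..1, x ^ (r+k) *
      (y ^ (s+k) * (-Real.log x) + y ^ (s+k) * (-Real.log y)) = vf r s k x := by
  rw [intervalIntegral.integral_const_mul, intervalIntegral.integral_add
    (((continuous_pow (s+k)).intervalIntegrable 0 1).mul_const _) (intble_negLog (s+k)),
    intervalIntegral.integral_mul_const, integral_pow, integral_negLog, vf]
  push_cast
  rw [one_pow, zero_pow (by positivity)]
  ring

lemma inner_eq (r s : ℕ) {x : ℝ} (hx : x ∈ Ioo (0:ℝ) 1) :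
    ∫ y in (0:ℝ)..1, x ^ r * y ^ s * Real.log (x * y) / (1 - x * y)
      = -∑' k : ℕ, vf r s k x := by
  obtain ⟨hx0, hx1⟩ := hx
  have key : ∀ y ∈ Ioo (0:ℝ) 1,
      -(x ^ r * y ^ s * Real.log (x * y) / (1 - x * y))
        = ∑' k : ℕ, x ^ (r+k) * (y ^ (s+k) * (-Real.log x) + y ^ (s+k) * (-Real.log y)) := by
    intro y ⟨hy0, hy1⟩
    have hxy0 : 0 ≤ x * y := by positivity
    have hxy1 : x * y < 1 := by nlinarith
    have hgeo : ∑' k : ℕ, (x*y)^k = (1 - x*y)⁻¹ := tsum_geometric_of_lt_one hxy0 hxy1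
    calc -(x ^ r * y ^ s * Real.log (x * y) / (1 - x * y))
        = (x ^ r * y ^ s * (-Real.log x - Real.log y)) * (1 - x*y)⁻¹ := by
          rw [Real.log_mul hx0.ne' hy0.ne', div_eq_mul_inv]; ring
      _ = (x ^ r * y ^ s * (-Real.log x - Real.log y)) * ∑' k : ℕ, (x*y)^k := by rw [hgeo]
      _ = ∑' k : ℕ, (x ^ r * y ^ s * (-Real.log x - Real.log y)) * (x*y)^k := by
          rw [tsum_mul_left]
      _ = _ := by
          congr 1; funext k
          rw [mul_pow, pow_add, pow_add]; ring
  have hneg : (∫ y in (0:ℝ)..1, x ^ r * y ^ s * Real.log (x * y) / (1 - x * y))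
      = -∫ y in (0:ℝ)..1, -(x ^ r * y ^ s * Real.log (x * y) / (1 - x * y)) := by
    rw [intervalIntegral.integral_neg, neg_neg]
  rw [hneg, neg_inj]
  rw [intervalIntegral.integral_of_le zero_le_one, integral_Ioc_eq_integral_Ioo]
  rw [setIntegral_congr_fun measurableSet_Ioo key]
  -- now swap sum and integral
  have hInt : ∀ k : ℕ, Integrable (fun y : ℝ => x ^ (r+k) *
      (y ^ (s+k) * (-Real.log x) + y ^ (s+k) * (-Real.log y)))
      (volume.restrict (Ioo (0:ℝ) 1)) := fun k =>
    (((intervalIntegrable_iff_integrableOn_Ioc_of_le zero_le_one).mp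
      (uk_integrable r s k x)).mono_set Ioo_subset_Ioc_self)
  have hnn : ∀ k : ℕ, ∀ y ∈ Ioo (0:ℝ) 1, 0 ≤ x ^ (r+k) *
      (y ^ (s+k) * (-Real.log x) + y ^ (s+k) * (-Real.log y)) := by
    intro k y ⟨hy0, hy1⟩
    have h1 : 0 ≤ -Real.log x := by
      simpa using Real.log_nonpos hx0.le hx1.le
    have h2 : 0 ≤ -Real.log y := by
      simpa using Real.log_nonpos hy0.le hy1.le
    have hyp : (0:ℝ) ≤ y ^ (s+k) := pow_nonneg hy0.le _
    have hxp : (0:ℝ) ≤ x ^ (r+k) := pow_nonneg hx0.le _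
    positivity
  have hval : ∀ k : ℕ, ∫ y in Ioo (0:ℝ) 1, x ^ (r+k) *
      (y ^ (s+k) * (-Real.log x) + y ^ (s+k) * (-Real.log y)) = vf r s k x := by
    intro k
    rw [← integral_Ioc_eq_integral_Ioo, ← intervalIntegral.integral_of_le zero_le_one]
    exact uk_integral r s k x
  have hsum : Summable fun k : ℕ => vf r s k x := by
    apply Summable.of_nonneg_of_le (fun k => ?_) (fun k => ?_)
      (((summable_geometric_of_lt_one hx0.le hx1)).mul_left (x ^ r * ((-Real.log x) + 1)))
    · have h1 : 0 ≤ -Real.log x := by simpa using Real.log_nonpos hx0.le hx1.le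
      have : (0:ℝ) < (s:ℝ)+k+1 := by positivity
      unfold vf; positivity
    · have h1 : 0 ≤ -Real.log x := by simpa using Real.log_nonpos hx0.le hx1.le
      have hb : (1:ℝ) ≤ (s:ℝ)+k+1 := by
        have h1 := (Nat.cast_nonneg s : (0:ℝ) ≤ s)
        have h2 := (Nat.cast_nonneg k : (0:ℝ) ≤ k)
        linarith
      have hb0 : (0:ℝ) < (s:ℝ)+k+1 := by positivity
      unfold vf
      rw [pow_add]
      have e1 : -Real.log x / ((s:ℝ)+k+1) ≤ -Real.log x := div_le_self h1 hb
      have e2 : 1 / ((s:ℝ)+k+1)^2 ≤ 1 := by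
        rw [div_le_one (by positivity)]; nlinarith
      have hxr : (0:ℝ) ≤ x ^ r := pow_nonneg hx0.le _
      have hxk : (0:ℝ) ≤ x ^ k := pow_nonneg hx0.le _
      calc x ^ r * x ^ k * (-Real.log x / ((s:ℝ)+k+1) + 1 / ((s:ℝ)+k+1)^2)
          ≤ x ^ r * x ^ k * ((-Real.log x) + 1) := by
            apply mul_le_mul_of_nonneg_left (add_le_add e1 e2) (by positivity)
        _ = x ^ r * ((-Real.log x) + 1) * x ^ k := by ring
  rw [← integral_tsum_of_summable_integral_norm hInt ?_]
  · exact tsum_congr fun k => hval k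
  · apply hsum.congr
    intro k
    rw [← hval k]
    refine (setIntegral_congr_fun measurableSet_Ioo fun y hy => ?_).symm
    exact Real.norm_of_nonneg (hnn k y hy)
noncomputable def gsq (n : ℕ) : ℝ := 1 / ((n:ℝ)+1)^2

lemma summable_gsq : Summable gsq := by
  have h : Summable (fun n : ℕ => 1 / (n:ℝ)^2) := summable_one_div_nat_pow.mpr one_lt_two
  have := (summable_nat_add_iff 1).mpr h
  apply this.congr
  intro n
  unfold gsq
  push_cast
  ring_nf

lemma summable_gshift (m : ℕ) : Summable (fun k : ℕ => 1 / ((m:ℝ)+k+1)^2) := by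
  have := (summable_nat_add_iff m).mpr summable_gsq
  apply this.congr
  intro n
  unfold gsq
  push_cast
  ring_nf

lemma range_gsq (m : ℕ) : ∑ i ∈ Finset.range m, gsq i = ∑ k ∈ Finset.Icc 1 m, 1 / (k:ℝ)^2 := by
  induction m with
  | zero => simp
  | succ n ih =>
    rw [Finset.sum_range_succ, Finset.sum_Icc_succ_top (by omega), ih]
    unfold gsq
    push_cast
    ring_nf

lemma tail_eq (m : ℕ) :
    ∑' k : ℕ, 1 / ((m:ℝ)+k+1)^2 = (∑' n, gsq n) - ∑ k ∈ Finset.Icc 1 m, 1 / (k:ℝ)^2 := by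
  have h := Summable.sum_add_tsum_nat_add (f := gsq) m summable_gsq
  have h2 : ∑' k : ℕ, gsq (k + m) = ∑' k : ℕ, 1 / ((m:ℝ)+k+1)^2 := by
    apply tsum_congr; intro k; unfold gsq; push_cast; ring_nf
  have h3 := range_gsq m
  rw [← h2, ← h, h3]
  ring

lemma telescope (r s : ℕ) :
    ∑' k : ℕ, (1 / ((s:ℝ)+k+1)^2 - 1 / ((r:ℝ)+k+1)^2)
      = (∑ k ∈ Finset.Icc 1 r, 1 / (k:ℝ)^2) - ∑ k ∈ Finset.Icc 1 s, 1 / (k:ℝ)^2 := by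
  rw [Summable.tsum_sub (summable_gshift s) (summable_gshift r), tail_eq, tail_eq]
  ring

lemma vf_intble (r s k : ℕ) : IntervalIntegrable (vf r s k) volume 0 1 := by
  have heq : vf r s k = fun x : ℝ =>
      (x ^ (r+k) * (-Real.log x)) / ((s:ℝ)+k+1) + x ^ (r+k) / ((s:ℝ)+k+1)^2 := by
    funext x; unfold vf; ring
  rw [heq]
  exact ((intble_negLog (r+k)).div_const _).add
    (((continuous_pow (r+k)).intervalIntegrable 0 1).div_const _)

lemma vf_integral (r s k : ℕ) :
    ∫ x in (0:ℝ)..1, vf r s k x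
      = 1 / (((r:ℝ)+k+1)^2 * ((s:ℝ)+k+1)) + 1 / (((r:ℝ)+k+1) * ((s:ℝ)+k+1)^2) := by
  have heq : vf r s k = fun x : ℝ =>
      (x ^ (r+k) * (-Real.log x)) / ((s:ℝ)+k+1) + x ^ (r+k) / ((s:ℝ)+k+1)^2 := by
    funext x; unfold vf; ring
  rw [heq, intervalIntegral.integral_add ((intble_negLog (r+k)).div_const _)
    (((continuous_pow (r+k)).intervalIntegrable 0 1).div_const _),
    intervalIntegral.integral_div, intervalIntegral.integral_div,
    integral_negLog, integral_pow]
  have ha : (0:ℝ) < (r:ℝ)+k+1 := by positivity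
  have hb : (0:ℝ) < (s:ℝ)+k+1 := by positivity
  push_cast
  rw [one_pow, zero_pow (by positivity)]
  field_simp
  ring

theorem beukers_Jrs (r s : ℕ) (hrs : r ≠ s) :
    -(∫ x in (0:ℝ)..1, ∫ y in (0:ℝ)..1, x ^ r * y ^ s * Real.log (x * y) / (1 - x * y)) =
      ((∑ k ∈ Finset.Icc 1 r, 1 / (k : ℝ) ^ 2) - ∑ k ∈ Finset.Icc 1 s, 1 / (k : ℝ) ^ 2) /
        ((r : ℝ) - (s : ℝ)) := by
  have hne : (r:ℝ) ≠ (s:ℝ) := fun h => hrs (Nat.cast_injective h)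
  have hd : (r:ℝ) - (s:ℝ) ≠ 0 := sub_ne_zero.mpr hne
  set ck : ℕ → ℝ := fun k =>
    1 / (((r:ℝ)+k+1)^2 * ((s:ℝ)+k+1)) + 1 / (((r:ℝ)+k+1) * ((s:ℝ)+k+1)^2) with hck
  have hck_eq : ∀ k : ℕ, ck k = (1 / ((s:ℝ)+k+1)^2 - 1 / ((r:ℝ)+k+1)^2) / ((r:ℝ) - (s:ℝ)) := by
    intro k
    have ha : (0:ℝ) < (r:ℝ)+k+1 := by positivity
    have hb : (0:ℝ) < (s:ℝ)+k+1 := by positivity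
    rw [hck]
    field_simp
    ring
  have hck_le : ∀ k : ℕ, ck k ≤ 2 * gsq k := by
    intro k
    have hK : (0:ℝ) < (k:ℝ)+1 := by positivity
    have ha : (k:ℝ)+1 ≤ (r:ℝ)+k+1 := by
      have := (Nat.cast_nonneg r : (0:ℝ) ≤ r); linarith
    have hb : (k:ℝ)+1 ≤ (s:ℝ)+k+1 := by
      have := (Nat.cast_nonneg s : (0:ℝ) ≤ s); linarith
    have hK1 : (1:ℝ) ≤ (k:ℝ)+1 := by linarith [(Nat.cast_nonneg k : (0:ℝ) ≤ k)]
    have e1 : 1 / (((r:ℝ)+k+1)^2 * ((s:ℝ)+k+1)) ≤ 1 / ((k:ℝ)+1)^2 := by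
      apply one_div_le_one_div_of_le (by positivity)
      nlinarith
    have e2 : 1 / (((r:ℝ)+k+1) * ((s:ℝ)+k+1)^2) ≤ 1 / ((k:ℝ)+1)^2 := by
      apply one_div_le_one_div_of_le (by positivity)
      nlinarith
    unfold gsq
    rw [hck]
    linarith
  have hck_nonneg : ∀ k : ℕ, 0 ≤ ck k := by
    intro k
    have ha : (0:ℝ) < (r:ℝ)+k+1 := by positivity
    have hb : (0:ℝ) < (s:ℝ)+k+1 := by positivity
    rw [hck]
    positivity
  have hck_summable : Summable ck :=
    Summable.of_nonneg_of_le hck_nonneg hck_le (summable_gsq.mul_left 2)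
  -- rewrite outer integral
  rw [intervalIntegral.integral_of_le zero_le_one, integral_Ioc_eq_integral_Ioo,
    setIntegral_congr_fun measurableSet_Ioo (fun x hx => inner_eq r s hx),
    MeasureTheory.integral_neg, neg_neg]
  have hInt : ∀ k : ℕ, Integrable (vf r s k) (volume.restrict (Ioo (0:ℝ) 1)) := fun k =>
    ((intervalIntegrable_iff_integrableOn_Ioc_of_le zero_le_one).mp
      (vf_intble r s k)).mono_set Ioo_subset_Ioc_self
  have hvf_nonneg : ∀ k : ℕ, ∀ x ∈ Ioo (0:ℝ) 1, 0 ≤ vf r s k x := by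
    intro k x ⟨hx0, hx1⟩
    have h1 : 0 ≤ -Real.log x := by simpa using Real.log_nonpos hx0.le hx1.le
    have hb : (0:ℝ) < (s:ℝ)+k+1 := by positivity
    unfold vf
    positivity
  have hval : ∀ k : ℕ, ∫ x in Ioo (0:ℝ) 1, vf r s k x = ck k := by
    intro k
    rw [← integral_Ioc_eq_integral_Ioo, ← intervalIntegral.integral_of_le zero_le_one]
    exact vf_integral r s k
  have hNorm : Summable fun k : ℕ => ∫ x in Ioo (0:ℝ) 1, ‖vf r s k x‖ := by
    apply hck_summable.congr
    intro k
    rw [← hval k]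
    refine (setIntegral_congr_fun measurableSet_Ioo fun x hx => ?_).symm
    exact Real.norm_of_nonneg (hvf_nonneg k x hx)
  rw [← integral_tsum_of_summable_integral_norm hInt hNorm]
  have : ∀ k : ℕ, ∫ x in Ioo (0:ℝ) 1, vf r s k x
      = (1 / ((s:ℝ)+k+1)^2 - 1 / ((r:ℝ)+k+1)^2) / ((r:ℝ) - (s:ℝ)) := fun k =>
    (hval k).trans (hck_eq k)
  rw [tsum_congr this, tsum_div_const, telescope]
end
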